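/- Let G be a torsion-free normed Abelian group with collinear zero-mean triples, and let a, b ∈ G be nonzero with m, n ∈ ℕ, m, n ≥ 1. Then |a - b| < |a| + |b| if and only if |ma - nb| < |ma| + |nb|. -/

import Mathlib

def IsGroupNorm {G : Type*} [AddCommGroup G] (ν : G → ℝ) : Prop :=
  (∀ g, 0 ≤ ν g) ∧ (∀ g h, ν (g + h) ≤ ν g + ν h) ∧
  (∀ g, ν (-g) = ν g) ∧ (∀ g, ν g = 0 ↔ g = 0)

def HasNBP {G : Type*} [AddCommGroup G] (ν : G → ℝ) : Prop :=
  ∀ (n : ℕ) (g : Fin n → G), (∑ i, g i) = 0 →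
    ∃ f : Fin n → Fin n → G,
      (∀ i j, f i j = - f j i) ∧ (∀ i, f i i = 0) ∧
      (∀ i, g i = ∑ j, f i j) ∧ (∀ i, ν (g i) = ∑ j, ν (f i j))

def HasCZT {G : Type*} [AddCommGroup G] (ν : G → ℝ) : Prop :=
  ∀ a b c : G, a + b + c = 0 →
    ν a + ν b = ν c ∨ ν a + ν c = ν b ∨ ν b + ν c = ν a

def IsIndecomposable {G : Type*} [AddCommGroup G] (ν : G → ℝ) (g : G) : Prop :=
  ∀ h : G, ν h + ν (g - h) = ν g → h = 0 ∨ h = g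

theorem stmt17 {G : Type*} [AddCommGroup G] (ν : G → ℝ) (hν : IsGroupNorm ν)
    (htf : ∀ (n : ℕ) (g : G), 1 ≤ n → n • g = 0 → g = 0)
    (hczt : HasCZT ν) (a b : G) (ha : a ≠ 0) (hb : b ≠ 0)
    (m n : ℕ) (hm : 1 ≤ m) (hn : 1 ≤ n) :
    ν (a - b) < ν a + ν b ↔ ν (m • a - n • b) < ν (m • a) + ν (n • b) := by
  obtain ⟨hpos, hsub, hneg, hzero⟩ := hν
  have h0 : ν 0 = 0 := (hzero 0).mpr rfl
  have h2 : ∀ g : G, ν (2 • g) = 2 * ν g := by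
    intro g
    rcases hczt g g (-(2 • g)) (by abel) with h | h | h
    · rw [hneg] at h; linarith
    · rw [hneg] at h
      have hz : ν (2 • g) = 0 := by linarith
      have hg : g = 0 := htf 2 g (by norm_num) ((hzero _).mp hz)
      subst hg; simp [h0]
    · rw [hneg] at h
      have hz : ν (2 • g) = 0 := by linarith
      have hg : g = 0 := htf 2 g (by norm_num) ((hzero _).mp hz)
      subst hg; simp [h0]
  have hpow : ∀ (j : ℕ) (g : G), ν (2 ^ j • g) = 2 ^ j * ν g := by
    intro j
    induction j with
    | zero => intro g; simp
    | succ j ih =>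
      intro g
      have he : (2 ^ (j + 1)) • g = 2 • (2 ^ j • g) := by
        rw [pow_succ', mul_smul]
      rw [he, h2, ih]; ring
  have hub : ∀ (k : ℕ) (g : G), ν (k • g) ≤ k * ν g := by
    intro k
    induction k with
    | zero => intro g; simp [h0]
    | succ k ih =>
      intro g
      have he : (k + 1) • g = k • g + g := succ_nsmul g k
      have := hsub (k • g) g
      rw [← he] at this
      have hk := ih g
      push_cast
      linarith
  have hom : ∀ (k : ℕ) (g : G), ν (k • g) = k * ν g := by
    intro k g
    refine le_antisymm (hub k g) ?_
    have hk : k ≤ 2 ^ k := (Nat.lt_two_pow_self (n := k)).le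
    have he : (2 ^ k) • g = k • g + (2 ^ k - k) • g := by
      rw [← add_smul, Nat.add_sub_cancel' hk]
    have h1 := hpow k g
    have h2' := hub (2 ^ k - k) g
    have hc : ((2 ^ k - k : ℕ) : ℝ) = 2 ^ k - (k : ℝ) := by
      rw [Nat.cast_sub hk]; push_cast; ring
    have h3 : ν (2 ^ k • g) ≤ ν (k • g) + ν ((2 ^ k - k) • g) := by
      rw [he]; exact hsub _ _
    rw [hc] at h2'
    linarith
  have hsubν : ∀ x y : G, ν (x - y) ≤ ν x + ν y := by
    intro x y
    have := hsub x (-y)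
    rw [hneg, ← sub_eq_add_neg] at this
    exact this
  have hnegsub : ∀ x y : G, ν (x - y) = ν (y - x) := by
    intro x y
    rw [← hneg (y - x), neg_sub]
  have Lfwd : ∀ (k : ℕ), 1 ≤ k → ∀ (x y : G), ν (x - y) = ν x + ν y →
      ν (k • x - y) = k * ν x + ν y := by
    intro k hk1 x y hxy
    obtain ⟨j, rfl⟩ : ∃ j, k = j + 1 := ⟨k - 1, (Nat.succ_pred_eq_of_pos hk1).symm⟩
    refine le_antisymm ?_ ?_
    · have := hsubν ((j + 1) • x) y
      rw [hom] at this
      exact this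
    · have he : (j + 1) • (x - y) = ((j + 1) • x - y) + -(j • y) := by
        rw [smul_sub, succ_nsmul y j]; abel
      have h1 : ν ((j + 1) • (x - y)) ≤ ν ((j + 1) • x - y) + ν (j • y) := by
        rw [he]
        calc ν (((j + 1) • x - y) + -(j • y)) ≤ ν ((j + 1) • x - y) + ν (-(j • y)) :=
              hsub _ _
          _ = ν ((j + 1) • x - y) + ν (j • y) := by rw [hneg]
      rw [hom ((j+1)) (x - y), hom j y, hxy] at h1
      push_cast at h1 ⊢
      linarith
  have Lbwd : ∀ (k : ℕ), 1 ≤ k → ∀ (x y : G), ν (k • x - y) = k * ν x + ν y →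
      ν (x - y) = ν x + ν y := by
    intro k hk1 x y hxy
    obtain ⟨j, rfl⟩ : ∃ j, k = j + 1 := ⟨k - 1, (Nat.succ_pred_eq_of_pos hk1).symm⟩
    refine le_antisymm (hsubν x y) ?_
    have he : (j + 1) • x - y = j • x + (x - y) := by
      rw [succ_nsmul x j]; abel
    have h1 : ν ((j + 1) • x - y) ≤ ν (j • x) + ν (x - y) := by
      rw [he]; exact hsub _ _
    rw [hxy, hom j x] at h1
    push_cast at h1 ⊢
    linarith
  have heq : ν (a - b) = ν a + ν b ↔ ν (m • a - n • b) = ν (m • a) + ν (n • b) := by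
    rw [hom m a, hom n b]
    constructor
    · intro h
      have h1 : ν (m • a - b) = m * ν a + ν b := Lfwd m hm a b h
      have h2' : ν (b - m • a) = ν b + ν (m • a) := by
        rw [hnegsub b (m • a), h1, hom m a]; ring
      have h3 : ν (n • b - m • a) = n * ν b + ν (m • a) := Lfwd n hn b (m • a) h2'
      rw [hnegsub (m • a) (n • b), h3, hom m a]; ring
    · intro h
      have h3 : ν (n • b - m • a) = n * ν b + ν (m • a) := by
        rw [hnegsub (n • b) (m • a), h, hom m a]; ring
      have h2' : ν (b - m • a) = ν b + ν (m • a) := Lbwd n hn b (m • a) h3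
      have h1 : ν (m • a - b) = m * ν a + ν b := by
        rw [hnegsub (m • a) b, h2', hom m a]; ring
      exact Lbwd m hm a b h1
  have hle1 : ν (a - b) ≤ ν a + ν b := hsubν a b
  have hle2 : ν (m • a - n • b) ≤ ν (m • a) + ν (n • b) := hsubν _ _
  constructor
  · intro h
    exact lt_of_le_of_ne hle2 fun hc => absurd (heq.mpr hc) (ne_of_lt h)
  · intro h
    exact lt_of_le_of_ne hle1 fun hc => absurd (heq.mp hc) (ne_of_lt h)
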